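/- Decay of the Eguchi–Hanson potential to the Euclidean potential with all derivatives (the expansion |∇^k(φ_{EH,s} − φ₀)| ≤ c₀(k)·r^{−2−k} of Proposition 'EHproperties'): Fix s > 0 and define f : ℝ → ℝ by f(r) = (1/2)·(s·Real.log(r^2) + Real.sqrt(s^2 + r^4) − s·Real.log(s + Real.sqrt(s^2 + r^4))) − r²/2. Then for every k ∈ ℕ there exist constants c > 0 and R ≥ 1 such that for all r ≥ R, |iteratedDeriv k f r| ≤ c·r^(−2−k). -/

import Mathlib

namespace EH

/-- The square-root appearing in the Eguchi–Hanson potential. -/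
noncomputable def uu (s r : ℝ) : ℝ := Real.sqrt (s^2 + r^4)

/-- The difference `φ_{EH,s} − φ₀`. -/
noncomputable def ff (s : ℝ) : ℝ → ℝ := fun r : ℝ =>
  (1/2) * (s * Real.log (r^2) + Real.sqrt (s^2 + r^4)
    - s * Real.log (s + Real.sqrt (s^2 + r^4))) - r^2/2

/-- A monomial `(c, a, b, e)` represents `c * r^a / (uu^b * (r^2+uu)^e)`. -/
noncomputable def tEval (s : ℝ) (t : ℝ × ℤ × ℕ × ℕ) (r : ℝ) : ℝ :=
  t.1 * r ^ t.2.1 / (uu s r ^ t.2.2.1 * (r^2 + uu s r) ^ t.2.2.2)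

/-- Formal derivative of a monomial. -/
def tDeriv (t : ℝ × ℤ × ℕ × ℕ) : List (ℝ × ℤ × ℕ × ℕ) :=
  [(t.1 * t.2.1, t.2.1 - 1, t.2.2.1, t.2.2.2),
   (-2 * t.2.2.1 * t.1, t.2.1 + 3, t.2.2.1 + 2, t.2.2.2),
   (-2 * t.2.2.2 * t.1, t.2.1 + 1, t.2.2.1 + 1, t.2.2.2)]

noncomputable def lEval (s : ℝ) (L : List (ℝ × ℤ × ℕ × ℕ)) (r : ℝ) : ℝ :=
  (L.map fun t => tEval s t r).sum

/-- Formal derivative of a sum of monomials. -/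
def lDeriv : List (ℝ × ℤ × ℕ × ℕ) → List (ℝ × ℤ × ℕ × ℕ)
  | [] => []
  | t :: ts => tDeriv t ++ lDeriv ts

lemma lEval_cons (s r : ℝ) (t : ℝ × ℤ × ℕ × ℕ) (L : List (ℝ × ℤ × ℕ × ℕ)) :
    lEval s (t :: L) r = tEval s t r + lEval s L r := by
  simp [lEval]

lemma lEval_append (s r : ℝ) (L M : List (ℝ × ℤ × ℕ × ℕ)) :
    lEval s (L ++ M) r = lEval s L r + lEval s M r := by
  simp [lEval]

variable {s r : ℝ}

lemma uu_sq (hs : 0 < s) (hr : 0 < r) : uu s r ^ 2 = s^2 + r^4 := by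
  rw [uu, Real.sq_sqrt]; positivity

lemma uu_ge (hr : 0 < r) : r ^ 2 ≤ uu s r := by
  rw [uu]
  have : r ^ 2 = Real.sqrt ((r^2)^2) := by rw [Real.sqrt_sq (by positivity)]
  rw [this]
  apply Real.sqrt_le_sqrt
  nlinarith

lemma uu_pos (hr : 0 < r) : 0 < uu s r :=
  lt_of_lt_of_le (by positivity) (uu_ge hr)

lemma hasDerivAt_uu (hs : 0 < s) (hr : 0 < r) :
    HasDerivAt (uu s) (2 * r ^ 3 / uu s r) r := by
  have h : HasDerivAt (fun x : ℝ => s^2 + x^4) (4 * r ^ 3) r := by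
    simpa using (hasDerivAt_pow 4 r).const_add (s^2)
  have := h.sqrt (by positivity)
  convert this using 1
  · rfl
  rw [uu]
  field_simp
  ring

lemma hasDerivAt_tEval (hs : 0 < s) (hr : 0 < r) (t : ℝ × ℤ × ℕ × ℕ) :
    HasDerivAt (tEval s t) (lEval s (tDeriv t) r) r := by
  obtain ⟨c, a, b, e⟩ := t
  have hu := uu_pos (s := s) hr
  have hv : 0 < r ^ 2 + uu s r := by positivity
  have hU := hasDerivAt_uu hs hr
  have hnum : HasDerivAt (fun x : ℝ => c * x ^ a) (c * (a * r ^ (a - 1))) r := by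
    simpa [mul_comm] using (hasDerivAt_zpow a r (Or.inl hr.ne')).const_mul c
  have hub : HasDerivAt (fun x => uu s x ^ b) (b * uu s r ^ (b - 1) * (2 * r ^ 3 / uu s r)) r :=
    hU.pow b
  have hV : HasDerivAt (fun x : ℝ => x ^ 2 + uu s x) (2 * r + 2 * r ^ 3 / uu s r) r := by
    exact ((hasDerivAt_pow 2 r).add hU).congr_deriv (by norm_num)
  have hvb : HasDerivAt (fun x : ℝ => (x ^ 2 + uu s x) ^ e)
      (e * (r ^ 2 + uu s r) ^ (e - 1) * (2 * r + 2 * r ^ 3 / uu s r)) r := hV.pow e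
  have hden := hub.mul hvb
  have hd : HasDerivAt (tEval s (c, a, b, e))
      ((c * (a * r ^ (a - 1)) * (uu s r ^ b * (r ^ 2 + uu s r) ^ e) -
        c * r ^ a *
          (b * uu s r ^ (b - 1) * (2 * r ^ 3 / uu s r) * (r ^ 2 + uu s r) ^ e +
           uu s r ^ b * (e * (r ^ 2 + uu s r) ^ (e - 1) * (2 * r + 2 * r ^ 3 / uu s r)))) /
        (uu s r ^ b * (r ^ 2 + uu s r) ^ e) ^ 2) r := hnum.div hden (by positivity)
  convert hd using 1
  set u := uu s r with hu_def
  simp only [lEval, tDeriv, tEval, List.map, List.sum_cons, List.sum_nil]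
  rw [show r ^ (a - 1) = r ^ a / r by rw [zpow_sub₀ hr.ne', zpow_one],
      show r ^ (a + 3) = r ^ a * r ^ (3:ℕ) by
        rw [zpow_add₀ hr.ne', show (3:ℤ) = ((3:ℕ):ℤ) from rfl, zpow_natCast],
      show r ^ (a + 1) = r ^ a * r by rw [zpow_add₀ hr.ne', zpow_one]]
  rw [← hu_def]
  rcases b with _ | b <;> rcases e with _ | e <;>
    simp only [Nat.add_sub_cancel, zero_tsub] <;> field_simp <;> ring

lemma hasDerivAt_lEval (hs : 0 < s) (hr : 0 < r) (L : List (ℝ × ℤ × ℕ × ℕ)) :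
    HasDerivAt (lEval s L) (lEval s (lDeriv L) r) r := by
  induction L with
  | nil => exact hasDerivAt_const r (0:ℝ)
  | cons t ts ih =>
    have h := (hasDerivAt_tEval hs hr t).add ih
    have : lEval s (t :: ts) = fun x => tEval s t x + lEval s ts x := by
      funext x; rw [lEval_cons]
    rw [this, lDeriv, lEval_append]
    exact h

/-- Every monomial in `L` has "growth degree" at most `d`. -/
def degLE (d : ℤ) (L : List (ℝ × ℤ × ℕ × ℕ)) : Prop :=
  ∀ t ∈ L, t.2.1 - 2 * (t.2.2.1 : ℤ) - 2 * (t.2.2.2 : ℤ) ≤ d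

lemma degLE_tDeriv {d : ℤ} {t : ℝ × ℤ × ℕ × ℕ}
    (h : t.2.1 - 2 * (t.2.2.1:ℤ) - 2 * (t.2.2.2:ℤ) ≤ d) :
    degLE (d - 1) (tDeriv t) := by
  obtain ⟨c, a, b, e⟩ := t
  simp only [tDeriv, degLE, List.mem_cons, List.not_mem_nil, or_false] at *
  rintro x (rfl | rfl | rfl) <;> push_cast <;> omega

lemma degLE_lDeriv {d : ℤ} {L : List (ℝ × ℤ × ℕ × ℕ)} (h : degLE d L) :
    degLE (d - 1) (lDeriv L) := by
  induction L with
  | nil => intro t ht; simp [lDeriv] at ht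
  | cons t ts ih =>
    intro x hx
    rw [lDeriv] at hx
    rcases List.mem_append.1 hx with hx | hx
    · exact degLE_tDeriv (h t List.mem_cons_self) x hx
    · exact ih (fun y hy => h y (List.mem_cons_of_mem t hy)) x hx

lemma tEval_bound (hr : 1 ≤ r) {d : ℤ} {t : ℝ × ℤ × ℕ × ℕ}
    (h : t.2.1 - 2 * (t.2.2.1:ℤ) - 2 * (t.2.2.2:ℤ) ≤ d) :
    |tEval s t r| ≤ |t.1| * r ^ d := by
  obtain ⟨c, a, b, e⟩ := t
  have hr0 : (0:ℝ) < r := lt_of_lt_of_le one_pos hr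
  have hu := uu_pos (s := s) hr0
  have huge := uu_ge (s := s) hr0
  have hv : r ^ 2 ≤ r ^ 2 + uu s r := by linarith
  have hden : (r ^ 2) ^ b * (r ^ 2) ^ e ≤ uu s r ^ b * (r^2 + uu s r) ^ e := by
    apply mul_le_mul (pow_le_pow_left₀ (by positivity) huge b)
      (pow_le_pow_left₀ (by positivity) hv e) (by positivity) (by positivity)
  have hdenpos : (0:ℝ) < (r ^ 2) ^ b * (r ^ 2) ^ e := by positivity
  have key : |tEval s (c, a, b, e) r| = |c| * (r ^ a / (uu s r ^ b * (r^2 + uu s r) ^ e)) := by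
    rw [tEval, abs_div, abs_mul, abs_of_pos (zpow_pos hr0 a),
      abs_of_pos (by positivity : (0:ℝ) < uu s r ^ b * (r^2 + uu s r) ^ e), mul_div_assoc]
  rw [key]
  have h1 : r ^ a / (uu s r ^ b * (r^2 + uu s r) ^ e) ≤ r ^ a / ((r ^ 2) ^ b * (r ^ 2) ^ e) :=
    div_le_div_of_nonneg_left (le_of_lt (zpow_pos hr0 a)) hdenpos hden
  have h2 : r ^ a / ((r ^ 2) ^ b * (r ^ 2) ^ e) = r ^ (a - 2 * (b:ℤ) - 2 * (e:ℤ)) := by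
    rw [← pow_mul, ← pow_mul, ← pow_add, ← zpow_natCast r (2*b + 2*e), ← zpow_sub₀ hr0.ne']
    push_cast
    ring_nf
  have h3 : r ^ (a - 2 * (b:ℤ) - 2 * (e:ℤ)) ≤ r ^ d := zpow_le_zpow_right₀ hr h
  have := (h1.trans (le_of_eq h2)).trans h3
  exact mul_le_mul_of_nonneg_left this (abs_nonneg c)

lemma lEval_bound (hr : 1 ≤ r) {d : ℤ} {L : List (ℝ × ℤ × ℕ × ℕ)}
    (h : degLE d L) :
    |lEval s L r| ≤ (L.map fun t => |t.1|).sum * r ^ d := by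
  induction L with
  | nil => simp [lEval]
  | cons t ts ih =>
    rw [lEval_cons]
    calc |tEval s t r + lEval s ts r| ≤ |tEval s t r| + |lEval s ts r| := abs_add_le _ _
    _ ≤ |t.1| * r ^ d + (ts.map fun t => |t.1|).sum * r ^ d := by
        gcongr
        · exact tEval_bound hr (h t List.mem_cons_self)
        · exact ih fun y hy => h y (List.mem_cons_of_mem t hy)
    _ = ((t :: ts).map fun t => |t.1|).sum * r ^ d := by simp [add_mul]

/-- The first derivative of `ff s` is the single monomial `s² r⁻¹ / (r² + uu)`. -/
lemma hasDerivAt_ff (hs : 0 < s) (hr : 0 < r) :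
    HasDerivAt (ff s) (lEval s [(s^2, -1, 0, 1)] r) r := by
  have hu := uu_pos (s := s) hr
  have hU := hasDerivAt_uu hs hr
  have h1 : HasDerivAt (fun x : ℝ => Real.log (x^2)) (2 * r / r ^ 2) r := by
    have := (hasDerivAt_pow 2 r).log (by positivity)
    convert this using 1
    norm_num
  have h3 : HasDerivAt (fun x : ℝ => Real.log (s + uu s x))
      ((2 * r ^ 3 / uu s r) / (s + uu s r)) r :=
    (hU.const_add s).log (by positivity)
  have hmain : HasDerivAt (ff s)
      ((1/2) * (s * (2 * r / r ^ 2) + 2 * r ^ 3 / uu s r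
        - s * ((2 * r ^ 3 / uu s r) / (s + uu s r))) - 2 * r / 2) r := by
    have := (((h1.const_mul s).add hU).sub (h3.const_mul s)).const_mul (1/2)
    have h2 : HasDerivAt (fun x : ℝ => x^2/2) (2 * r / 2) r := by
      simpa using (hasDerivAt_pow 2 r).div_const 2
    exact (this.sub h2).congr_deriv (by ring)
  refine hmain.congr_deriv ?_
  have hu2 := uu_sq hs hr
  simp only [lEval, tEval, tDeriv, List.map, List.sum_cons, List.sum_nil]
  set u := uu s r
  field_simp
  linear_combination (s*u - u*r^2) * hu2

/-- Iterated derivatives of `ff s` on `(0,∞)` are given by iterated formal derivatives. -/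
lemma iteratedDeriv_ff (hs : 0 < s) (m : ℕ) :
    ∀ r : ℝ, 0 < r →
      iteratedDeriv (m + 1) (ff s) r = lEval s (lDeriv^[m] [(s^2, -1, 0, 1)]) r := by
  induction m with
  | zero =>
    intro r hr
    rw [iteratedDeriv_one]
    simpa using (hasDerivAt_ff hs hr).deriv
  | succ m ih =>
    intro r hr
    have hev : iteratedDeriv (m + 1) (ff s) =ᶠ[nhds r]
        lEval s (lDeriv^[m] [(s^2, -1, 0, 1)]) := by
      filter_upwards [Ioi_mem_nhds hr] with x hx using ih x hx
    rw [iteratedDeriv_succ, hev.deriv_eq,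
      (hasDerivAt_lEval hs hr (lDeriv^[m] [(s^2, -1, 0, 1)])).deriv,
      ← Function.iterate_succ_apply' lDeriv m]

lemma degLE_iter (m : ℕ) : degLE (-3 - m) (lDeriv^[m] [((s:ℝ)^2, (-1:ℤ), (0:ℕ), (1:ℕ))]) := by
  induction m with
  | zero =>
    intro t ht
    simp only [Function.iterate_zero_apply, List.mem_singleton] at ht
    subst ht
    norm_num
  | succ m ih =>
    rw [Function.iterate_succ_apply',
      show (-3 : ℤ) - ((m+1:ℕ):ℤ) = (-3 - (m:ℤ)) - 1 by push_cast; ring]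
    exact degLE_lDeriv ih

/-- Bound for the zeroth derivative. -/
lemma ff_bound (hs : 0 < s) (hr : 1 ≤ r) :
    |ff s r| ≤ (s^2/4 + s*(s + s^2/2)/2 + 1) * r ^ (-2:ℤ) := by
  have hr0 : (0:ℝ) < r := lt_of_lt_of_le one_pos hr
  have hu := uu_pos (s := s) hr0
  have huge := uu_ge (s := s) hr0
  have hu2 := uu_sq hs hr0
  set u := uu s r with hu_def
  set A := u - r^2 with hA_def
  set B := Real.log (s + u) - Real.log (r^2) with hB_def
  clear_value u A B
  have key : A * (u + r^2) = s^2 := by rw [hA_def]; linear_combination hu2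
  have hA0 : 0 ≤ A := by simp only [hA_def]; linarith
  have hA' : A * (2 * r^2) ≤ s^2 := by nlinarith
  have hr2 : 1 ≤ r^2 := by nlinarith
  have hA2 : A ≤ s^2/2 := by nlinarith
  have hB0 : 0 ≤ B := by
    rw [hB_def]
    have : Real.log (r^2) ≤ Real.log (s + u) :=
      Real.log_le_log (by positivity) (by linarith)
    linarith
  have hBlog : B = Real.log ((s + u)/r^2) := by
    rw [hB_def, Real.log_div (by positivity) (by positivity)]
  have hB1 : B ≤ (s + u)/r^2 - 1 := by
    rw [hBlog]
    exact Real.log_le_sub_one_of_pos (by positivity)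
  have hB' : B * r^2 ≤ s + s^2/2 := by
    have h1 : ((s + u)/r^2 - 1) * r^2 = s + A := by
      have hdm : (s + u)/r^2 * r^2 = s + u := div_mul_cancel₀ _ (by positivity : (r:ℝ)^2 ≠ 0)
      rw [hA_def]
      linear_combination hdm
    have h2 : B * r^2 ≤ ((s + u)/r^2 - 1) * r^2 := by nlinarith
    nlinarith
  have hfr : ff s r = A/2 - s*B/2 := by
    simp only [ff, hA_def, hB_def, hu_def, uu]
    ring
  have hpow : (r:ℝ) ^ (-2:ℤ) = 1/r^2 := by
    rw [zpow_neg, show ((2:ℤ)) = ((2:ℕ):ℤ) from rfl, zpow_natCast, one_div]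
  have hAr0 : 0 ≤ A * r^2 := mul_nonneg hA0 (by positivity)
  have hBr0 : 0 ≤ B * r^2 := mul_nonneg hB0 (by positivity)
  rw [hfr, hpow, mul_one_div, le_div_iff₀ (by positivity)]
  have habs : |A/2 - s*B/2| * r^2 = |(A/2 - s*B/2) * r^2| := by
    rw [abs_mul, abs_of_pos (show (0:ℝ) < r^2 by positivity)]
  rw [habs, abs_le]
  have e1 : (A/2 - s*B/2) * r^2 = (A*r^2)/2 - (s*(B*r^2))/2 := by ring
  rw [e1]
  have hX : A*r^2 ≤ s^2/2 := by linarith [hA']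
  have hY : 0 ≤ s*(B*r^2) := mul_nonneg hs.le hBr0
  have hY2 : s*(B*r^2) ≤ s*(s + s^2/2) := mul_le_mul_of_nonneg_left hB' hs.le
  have hs3 : 0 ≤ s^3 := by positivity
  have hs2 : 0 ≤ s^2 := sq_nonneg s
  constructor
  · linarith
  · linarith

end EH

/-- Decay of the Eguchi–Hanson potential to the Euclidean potential with all derivatives:
for `f = φ_{EH,s} − φ₀` and every `k`, `|f⁽ᵏ⁾(r)| ≤ c·r^(−2−k)` for all sufficiently large `r`. -/
theorem eguchiHanson_potential_decay (s : ℝ) (hs : 0 < s) (k : ℕ) :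
    ∃ c > (0 : ℝ), ∃ R ≥ (1 : ℝ), ∀ r ≥ R,
      |iteratedDeriv k (fun r : ℝ =>
          (1/2) * (s * Real.log (r^2) + Real.sqrt (s^2 + r^4)
            - s * Real.log (s + Real.sqrt (s^2 + r^4))) - r^2/2) r|
        ≤ c * r ^ ((-2 : ℝ) - (k : ℝ)) := by
  have hpow : ∀ r : ℝ, 0 < r → r ^ ((-2 : ℝ) - (k : ℝ)) = r ^ ((-2 - (k:ℤ)) : ℤ) := by
    intro r hr
    rw [← Real.rpow_intCast r (-2 - (k:ℤ))]
    congr 1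
    push_cast
    ring
  cases k with
  | zero =>
    refine ⟨s^2/4 + s*(s + s^2/2)/2 + 1, by positivity, 1, le_refl 1, fun r hr => ?_⟩
    have hr0 : (0:ℝ) < r := lt_of_lt_of_le one_pos hr
    rw [iteratedDeriv_zero, hpow r hr0,
      show (-2 - ((0:ℕ):ℤ)) = (-2:ℤ) by norm_num]
    exact EH.ff_bound hs hr
  | succ m =>
    set L : List (ℝ × ℤ × ℕ × ℕ) := EH.lDeriv^[m] [((s:ℝ)^2, (-1:ℤ), (0:ℕ), (1:ℕ))] with hL
    set C : ℝ := (L.map fun t => |t.1|).sum with hC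
    have hC0 : 0 ≤ C := by
      rw [hC]
      apply List.sum_nonneg
      intro x hx
      simp only [List.mem_map] at hx
      obtain ⟨t, _, rfl⟩ := hx
      exact abs_nonneg _
    refine ⟨C + 1, by linarith, 1, le_refl 1, fun r hr => ?_⟩
    have hr0 : (0:ℝ) < r := lt_of_lt_of_le one_pos hr
    have heq : iteratedDeriv (m + 1) (EH.ff s) r = EH.lEval s L r :=
      EH.iteratedDeriv_ff hs m r hr0
    have hbd : |EH.lEval s L r| ≤ C * r ^ ((-3 - (m:ℤ)) : ℤ) :=
      EH.lEval_bound hr (EH.degLE_iter m)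
    have hexp : ((-2 : ℤ) - ((m+1 : ℕ) : ℤ)) = -3 - (m:ℤ) := by push_cast; ring
    rw [hpow r hr0, hexp]
    calc |iteratedDeriv (m+1) (fun r : ℝ =>
          (1/2) * (s * Real.log (r^2) + Real.sqrt (s^2 + r^4)
            - s * Real.log (s + Real.sqrt (s^2 + r^4))) - r^2/2) r|
        = |EH.lEval s L r| := by rw [show (fun r : ℝ =>
            (1/2) * (s * Real.log (r^2) + Real.sqrt (s^2 + r^4)
              - s * Real.log (s + Real.sqrt (s^2 + r^4))) - r^2/2) = EH.ff s from rfl, heq]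
    _ ≤ C * r ^ ((-3 - (m:ℤ)) : ℤ) := hbd
    _ ≤ (C + 1) * r ^ ((-3 - (m:ℤ)) : ℤ) := by
        have : (0:ℝ) < r ^ ((-3 - (m:ℤ)) : ℤ) := zpow_pos hr0 _
        nlinarith
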